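/- Let B ≥ 2 be an integer and let 𝔸, 𝔹 be the Neumann matching matrices of size B×B. Then det(𝔸 − 𝔹) = −B. -/

import Mathlib

open Matrix

/-- The Neumann matching matrix `𝔸` of size `B×B`: rows `0,…,B−2` (0-indexed) have a `1` on
the diagonal and a `−1` on the superdiagonal; the last row is zero. -/
def neumannA (B : ℕ) : Matrix (Fin B) (Fin B) ℝ :=
  Matrix.of fun i j =>
    if (i : ℕ) + 1 < B then
      (if j = i then 1 else if (j : ℕ) = (i : ℕ) + 1 then -1 else 0)
    else 0

/-- The Neumann matching matrix `𝔹` of size `B×B`: every entry of the last row is `1`,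
all other entries are `0`. -/
def neumannB (B : ℕ) : Matrix (Fin B) (Fin B) ℝ :=
  Matrix.of fun i _ => if (i : ℕ) + 1 = B then 1 else 0

/-- `det(𝔸 − 𝔹) = −B` for the Neumann matching matrices. -/
theorem neumann_det_A_sub_B (B : ℕ) (hB : 2 ≤ B) :
    (neumannA B - neumannB B).det = -(B : ℝ) := by
  obtain ⟨n, rfl⟩ : ∃ n, B = n + 1 := ⟨B - 1, by omega⟩
  set B := n + 1 with hBdef
  set M : Matrix (Fin B) (Fin B) ℝ := neumannA B - neumannB B with hM
  -- the column-operation matrix: add every column to column 0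
  set C : Matrix (Fin B) (Fin B) ℝ :=
    Matrix.of (fun j k => if (k : ℕ) = 0 then 1 else if j = k then 1 else 0) with hCdef
  have hMentry : ∀ i j : Fin B, M i j =
      (if (i : ℕ) + 1 < B then
        (if j = i then 1 else if (j : ℕ) = (i : ℕ) + 1 then -1 else 0) else 0)
      - (if (i : ℕ) + 1 = B then 1 else 0) := by
    intro i j; simp [hM, neumannA, neumannB]
  -- row sums of M
  have hrowsum : ∀ i : Fin B, (∑ j, M i j) = if (i : ℕ) + 1 = B then -(B : ℝ) else 0 := by
    intro i
    by_cases hi : (i : ℕ) + 1 < B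
    · have hine : (i : ℕ) + 1 ≠ B := by omega
      have key : ∀ j : Fin B, M i j =
          (if j = i then (1:ℝ) else 0) + (if j = (⟨(i:ℕ)+1, hi⟩ : Fin B) then -1 else 0) := by
        intro j
        rw [hMentry]
        have hiff : ((j : ℕ) = (i : ℕ) + 1) ↔ j = (⟨(i:ℕ)+1, hi⟩ : Fin B) := by
          rw [Fin.ext_iff]
        simp only [hi, if_true, hine, if_false, sub_zero, hiff]
        split_ifs with h1 h2
        · exfalso
          rw [h1, Fin.ext_iff] at h2
          simp only [Fin.val_mk] at h2
          omega
        · ring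
        · ring
        · ring
      rw [Finset.sum_congr rfl fun j _ => key j, Finset.sum_add_distrib,
        Finset.sum_ite_eq' Finset.univ i (fun _ => (1:ℝ)),
        Finset.sum_ite_eq' Finset.univ (⟨(i:ℕ)+1, hi⟩ : Fin B) (fun _ => (-1:ℝ))]
      simp [hine]
    · have hie : (i : ℕ) + 1 = B := by omega
      have key : ∀ j : Fin B, M i j = -1 := by
        intro j; rw [hMentry]; simp [hi, hie]
      rw [Finset.sum_congr rfl fun j _ => key j]
      simp [hie, Finset.card_univ]
  -- entries of M * C
  have hMC : ∀ i k : Fin B, (M * C) i k =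
      if (k : ℕ) = 0 then (if (i : ℕ) + 1 = B then -(B : ℝ) else 0) else M i k := by
    intro i k
    rw [Matrix.mul_apply]
    by_cases hk : (k : ℕ) = 0
    · simp only [hCdef, Matrix.of_apply, hk, if_true, mul_one]
      exact hrowsum i
    · simp only [hCdef, Matrix.of_apply, hk, if_false]
      rw [Finset.sum_congr rfl (fun j _ => by rw [mul_ite, mul_one, mul_zero]),
        Finset.sum_ite_eq' Finset.univ k (fun j => M i j)]
      simp [hk]
  have hCdet : C.det = 1 := by
    rw [Matrix.det_of_lowerTriangular]
    · apply Finset.prod_eq_one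
      intro i _
      simp [hCdef]
    · intro i j hij
      have hij' : i < j := hij
      have h1 : (j : ℕ) ≠ 0 := by
        have := Fin.lt_iff_val_lt_val.mp hij'
        omega
      have h2 : i ≠ j := ne_of_lt hij'
      simp [hCdef, h1, h2]
      exact fun h => h1 (by simp [h])
  -- the permuted matrix is lower triangular
  set σ := finRotate B with hσ
  set P := (M * C).submatrix id σ with hP
  have hPLT : P.BlockTriangular OrderDual.toDual := by
    intro i j hij
    have hij' : (i : ℕ) < (j : ℕ) := hij
    simp only [hP, Matrix.submatrix_apply, id_eq]
    by_cases hjl : j = Fin.last n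
    · have hσj : σ j = 0 := by
        rw [hσ, hjl, finRotate_succ_apply]
        simp
      rw [hσj, hMC]
      have h1 : (i : ℕ) + 1 ≠ B := by
        have : (j : ℕ) = n := by rw [hjl]; simp
        omega
      simp [h1]
    · have hσj : (σ j : ℕ) = (j : ℕ) + 1 := by
        rw [hσ]; exact coe_finRotate_of_ne_last hjl
      have hjne : (σ j : ℕ) ≠ 0 := by omega
      rw [hMC, if_neg hjne, hMentry]
      have h1 : (i : ℕ) + 1 ≠ B := by
        have := Fin.val_lt_last hjl
        omega
      have h2 : ¬(σ j = i) := by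
        intro h; rw [Fin.ext_iff] at h; omega
      have h3 : ¬((σ j : ℕ) = (i : ℕ) + 1) := by omega
      simp [h1, h2, h3]
  have hPdiag : ∀ i : Fin B, P i i = if (i : ℕ) + 1 = B then -(B : ℝ) else -1 := by
    intro i
    by_cases hi : (i : ℕ) + 1 = B
    · have hil : i = Fin.last n := by
        rw [Fin.ext_iff]; simp only [Fin.val_last]; omega
      have hσi : σ i = 0 := by rw [hσ, hil, finRotate_succ_apply]; simp
      simp only [hP, Matrix.submatrix_apply, id_eq, hσi]
      rw [hMC]
      simp [hi]
    · have hil : i ≠ Fin.last n := by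
        intro h; rw [h] at hi; simp at hi; exact hi hBdef.symm
      have hσi : (σ i : ℕ) = (i : ℕ) + 1 := by
        rw [hσ]; exact coe_finRotate_of_ne_last hil
      have hσne : (σ i : ℕ) ≠ 0 := by omega
      simp only [hP, Matrix.submatrix_apply, id_eq]
      rw [hMC, if_neg hσne, hMentry]
      have h1 : (i : ℕ) + 1 < B := by omega
      have h2 : ¬(σ i = i) := by intro h; rw [Fin.ext_iff] at h; omega
      simp [h1, h2, hσi, hi]
  have hPdet : P.det = (-1 : ℝ) ^ n * (-(B : ℝ)) := by
    rw [Matrix.det_of_lowerTriangular P hPLT, Fin.prod_univ_castSucc]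
    have hlast : P (Fin.last n) (Fin.last n) = -(B : ℝ) := by
      rw [hPdiag]
      simp
      exact fun h => absurd hBdef.symm h
    have hcast : ∀ i : Fin n, P i.castSucc i.castSucc = -1 := by
      intro i
      have hne : ((Fin.castSucc i : Fin B) : ℕ) + 1 ≠ B := by
        rw [Fin.coe_castSucc]
        have := i.isLt
        omega
      rw [hPdiag, if_neg hne]
    rw [hlast, Finset.prod_congr rfl fun i _ => hcast i]
    simp
  have hsign : ((Equiv.Perm.sign σ : ℤ) : ℝ) = (-1 : ℝ) ^ n := by
    rw [hσ, sign_finRotate]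
    push_cast
    rw [hBdef, Nat.add_sub_cancel]
  have hdet2 : P.det = (-1 : ℝ) ^ n * (M * C).det := by
    rw [hP, Matrix.det_permute', hsign]
  have hMCdet : (M * C).det = M.det := by
    rw [Matrix.det_mul, hCdet, mul_one]
  have hpow : ((-1 : ℝ) ^ n) * ((-1 : ℝ) ^ n) = 1 := by
    rw [← pow_add]
    exact Even.neg_one_pow ⟨n, rfl⟩
  have hfin := hdet2
  rw [hPdet, hMCdet] at hfin
  have hfin2 := congrArg (fun x => (-1 : ℝ) ^ n * x) hfin
  rw [← mul_assoc, hpow, one_mul, ← mul_assoc, hpow, one_mul] at hfin2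
  exact hfin2.symm
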